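/- Let Λ be a finite set. Let ξ₁, ξ₂, ξ₃ : Λ → [0,1] be response functions (ξ_t(λ) is the probability of outcome 0 of measurement M_t in ontic state λ) satisfying (1/3)(ξ₁(λ) + ξ₂(λ) + ξ₃(λ)) = 1/2 for every λ ∈ Λ (measurement noncontextuality applied to the operational equivalence of the uniform mixture M_* of the three measurements with a fair coin flip). For each t ∈ {1,2,3} and b ∈ {0,1} let μ_{t,b} : Λ → [0,1] be a probability distribution, and suppose the mixtures ½(μ_{t,0} + μ_{t,1}) are equal to one and the same distribution ν for all t ∈ {1,2,3} (preparation noncontextuality applied to the operational equivalence of the three two-element ensembles). Then A' := (1/6) Σ_{t=1}^{3} [ Σ_{λ} ξ_t(λ) μ_{t,0}(λ) + Σ_{λ} (1 − ξ_t(λ)) μ_{t,1}(λ) ] ≤ 5/6. (The fair-coin-flip noncontextuality inequality.) -/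
import Mathlib

open scoped BigOperators

lemma one_fcf (a x ν : ℝ) (hx0 : 0 ≤ x) (hx2 : x ≤ 2 * ν) :
    a * x ≤ max a 0 * (2 * ν) := by
  rcases le_total a 0 with h | h
  · rw [max_eq_right h]
    simpa using mul_nonpos_of_nonpos_of_nonneg h hx0
  · rw [max_eq_left h]
    exact mul_le_mul_of_nonneg_left hx2 h

lemma key_fcf (a b c x y z ν : ℝ)
    (ha : -1 ≤ a) (ha' : a ≤ 1) (hb : -1 ≤ b) (hb' : b ≤ 1) (hc : -1 ≤ c) (hc' : c ≤ 1)
    (hsum : a + b + c = 0)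
    (hx0 : 0 ≤ x) (hx2 : x ≤ 2 * ν)
    (hy0 : 0 ≤ y) (hy2 : y ≤ 2 * ν)
    (hz0 : 0 ≤ z) (hz2 : z ≤ 2 * ν) :
    a * x + b * y + c * z ≤ 2 * ν := by
  have hν : 0 ≤ ν := by linarith
  have h1 := one_fcf a x ν hx0 hx2
  have h2 := one_fcf b y ν hy0 hy2
  have h3 := one_fcf c z ν hz0 hz2
  have hm : max a 0 + max b 0 + max c 0 ≤ 1 := by
    rcases le_total a 0 with h | h <;> rcases le_total b 0 with h' | h' <;>
      rcases le_total c 0 with h'' | h'' <;>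
      simp only [max_eq_left, max_eq_right, *] <;> linarith
  have := mul_le_mul_of_nonneg_right hm (by linarith : (0:ℝ) ≤ 2 * ν)
  nlinarith

theorem fair_coin_flip_noncontextuality_inequality
    (Λ : Type*) [Fintype Λ]
    (ξ : Fin 3 → Λ → ℝ)
    (hξ01 : ∀ t l, ξ t l ∈ Set.Icc (0 : ℝ) 1)
    (hmnc : ∀ l, (1 / 3 : ℝ) * (ξ 0 l + ξ 1 l + ξ 2 l) = 1 / 2)
    (μ : Fin 3 → Bool → Λ → ℝ)
    (hμ : ∀ t b, (∀ l, 0 ≤ μ t b l) ∧ ∑ l, μ t b l = 1)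
    (ν : Λ → ℝ)
    (hpnc : ∀ t l, (1 / 2 : ℝ) * (μ t false l + μ t true l) = ν l) :
    (1 / 6 : ℝ) * ∑ t : Fin 3,
        ((∑ l, ξ t l * μ t false l) + ∑ l, (1 - ξ t l) * μ t true l) ≤ 5 / 6 := by
  have hνsum : ∑ l, ν l = 1 := by
    have h0 := (hμ 0 false).2
    have h1 := (hμ 0 true).2
    have : ∑ l, ν l = ∑ l, (1 / 2 : ℝ) * (μ 0 false l + μ 0 true l) := by
      refine Finset.sum_congr rfl fun l _ => ?_
      rw [hpnc 0 l]
    rw [this]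
    rw [Finset.sum_congr rfl fun l _ => (mul_add _ _ _)]
    rw [Finset.sum_add_distrib, ← Finset.mul_sum, ← Finset.mul_sum, h0, h1]
    norm_num
  have hpt : ∀ l, (∑ t : Fin 3, (ξ t l * μ t false l + (1 - ξ t l) * μ t true l)) ≤ 5 * ν l := by
    intro l
    have hb : ∀ t : Fin 3, 0 ≤ μ t true l ∧ μ t true l ≤ 2 * ν l ∧
        μ t false l = 2 * ν l - μ t true l := by
      intro t
      have h1 := (hμ t false).1 l
      have h2 := (hμ t true).1 l
      have h3 := hpnc t l
      exact ⟨h2, by linarith, by linarith⟩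
    obtain ⟨hb0, hb0', he0⟩ := hb 0
    obtain ⟨hb1, hb1', he1⟩ := hb 1
    obtain ⟨hb2, hb2', he2⟩ := hb 2
    have hm := hmnc l
    have hx0 := hξ01 0 l
    have hx1 := hξ01 1 l
    have hx2 := hξ01 2 l
    simp only [Set.mem_Icc] at hx0 hx1 hx2
    have key := key_fcf (1 - 2 * ξ 0 l) (1 - 2 * ξ 1 l) (1 - 2 * ξ 2 l)
      (μ 0 true l) (μ 1 true l) (μ 2 true l) (ν l)
      (by linarith) (by linarith) (by linarith) (by linarith) (by linarith) (by linarith)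
      (by linarith) hb0 hb0' hb1 hb1' hb2 hb2'
    rw [Fin.sum_univ_three]
    rw [he0, he1, he2]
    nlinarith
  have hswap : ∑ t : Fin 3, ((∑ l, ξ t l * μ t false l) + ∑ l, (1 - ξ t l) * μ t true l)
      = ∑ l, ∑ t : Fin 3, (ξ t l * μ t false l + (1 - ξ t l) * μ t true l) := by
    rw [Finset.sum_comm]
    exact Finset.sum_congr rfl fun t _ => (Finset.sum_add_distrib).symm
  rw [hswap]
  have hle : ∑ l, ∑ t : Fin 3, (ξ t l * μ t false l + (1 - ξ t l) * μ t true l)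
      ≤ ∑ l, 5 * ν l := Finset.sum_le_sum fun l _ => hpt l
  rw [← Finset.mul_sum, hνsum] at hle
  linarith
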